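/- Monotonicity of the payoff in protection levels: the attacker's payoff U^a(a,d) is non-increasing in each defender coordinate d_k, provided the losses are monotone with respect to the partial order on sparsity patterns (Δ_s ≥ Δ_{s'} whenever s ≤ s' coordinatewise, i.e., more disabled nodes give larger loss). -/
import Mathlib

def patProb (n : ℕ) (a d : Fin n → ℝ) (s : Fin n → Bool) : ℝ :=
  ∏ k, if s k then 1 - a k * (1 - d k) else a k * (1 - d k)

def payoff (n : ℕ) (Δ : (Fin n → Bool) → ℝ) (a d : Fin n → ℝ) : ℝ :=
  ∑ s : Fin n → Bool, patProb n a d s * Δ s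

open Finset

lemma sum_split {n : ℕ} (j : Fin n) (g : (Fin n → Bool) → ℝ) :
    ∑ s : Fin n → Bool, g s =
      ∑ s ∈ univ.filter (fun s => s j = false), (g s + g (Function.update s j true)) := by
  rw [← Finset.sum_filter_add_sum_filter_not univ (fun s => s j = false), Finset.sum_add_distrib]
  congr 1
  apply Finset.sum_nbij' (fun s => Function.update s j false) (fun s => Function.update s j true)
  · intro s hs
    simp only [mem_filter, mem_univ, true_and] at hs ⊢
    simp
  · intro s hs
    simp only [mem_filter, mem_univ, true_and] at hs ⊢
    simp
  · intro s hs
    simp only [mem_filter, mem_univ, true_and] at hs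
    funext k
    by_cases hk : k = j
    · subst hk; simp [Function.update_self]; simpa using hs
    · simp [Function.update_of_ne hk]
  · intro s hs
    simp only [mem_filter, mem_univ, true_and] at hs
    funext k
    by_cases hk : k = j
    · subst hk; simp [Function.update_self, hs]
    · simp [Function.update_of_ne hk]
  · intro s hs
    simp only [mem_filter, mem_univ, true_and] at hs
    congr 1
    funext k
    by_cases hk : k = j
    · subst hk; simp [Function.update_self]; simpa using hs
    · simp [Function.update_of_ne hk]

lemma patProb_false {n : ℕ} (a d : Fin n → ℝ) (j : Fin n) (s : Fin n → Bool)
    (h : s j = false) :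
    patProb n a d s = (a j * (1 - d j)) *
      ∏ k ∈ univ.erase j, (if s k then 1 - a k * (1 - d k) else a k * (1 - d k)) := by
  rw [patProb, ← Finset.mul_prod_erase _ _ (mem_univ j), h]
  simp

lemma patProb_true {n : ℕ} (a d : Fin n → ℝ) (j : Fin n) (s : Fin n → Bool)
    (h : s j = false) :
    patProb n a d (Function.update s j true) = (1 - a j * (1 - d j)) *
      ∏ k ∈ univ.erase j, (if s k then 1 - a k * (1 - d k) else a k * (1 - d k)) := by
  rw [patProb, ← Finset.mul_prod_erase _ _ (mem_univ j), Function.update_self]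
  simp only [if_true]
  congr 1
  apply Finset.prod_congr rfl
  intro k hk
  rw [Function.update_of_ne (Finset.mem_erase.mp hk).1]

lemma step {n : ℕ} (a d : Fin n → ℝ) (j : Fin n) (c : ℝ)
    (ha : ∀ k, a k ∈ Set.Icc (0:ℝ) 1) (hd : ∀ k, d k ∈ Set.Icc (0:ℝ) 1)
    (h1 : d j ≤ c) (hc : c ≤ 1)
    (Δ : (Fin n → Bool) → ℝ) (hΔ0 : ∀ s, 0 ≤ Δ s)
    (hanti : ∀ s s' : Fin n → Bool, (∀ k, s k ≤ s' k) → Δ s' ≤ Δ s) :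
    payoff n Δ a (Function.update d j c) ≤ payoff n Δ a d := by
  unfold payoff
  rw [sum_split j, sum_split j]
  apply Finset.sum_le_sum
  intro s hs
  simp only [mem_filter, mem_univ, true_and] at hs
  set R := ∏ k ∈ univ.erase j, (if s k then 1 - a k * (1 - d k) else a k * (1 - d k)) with hR
  have hRd' : (∏ k ∈ univ.erase j,
      (if s k then 1 - a k * (1 - Function.update d j c k) else a k * (1 - Function.update d j c k))) = R := by
    apply Finset.prod_congr rfl
    intro k hk
    rw [Function.update_of_ne (Finset.mem_erase.mp hk).1]
  rw [patProb_false a d j s hs, patProb_true a d j s hs,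
      patProb_false a (Function.update d j c) j s hs,
      patProb_true a (Function.update d j c) j s hs, hRd', Function.update_self]
  have hR0 : 0 ≤ R := by
    apply Finset.prod_nonneg
    intro k _
    rcases ha k with ⟨ha0, ha1⟩; rcases hd k with ⟨hd0, hd1⟩
    by_cases h : s k <;> simp [h] <;> nlinarith
  have hΔle : Δ (Function.update s j true) ≤ Δ s := by
    apply hanti
    intro k
    by_cases hk : k = j
    · subst hk; simp [hs]
    · simp [Function.update_of_ne hk]
  have hP : a j * (1 - c) ≤ a j * (1 - d j) := by
    rcases ha j with ⟨ha0, _⟩; nlinarith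
  nlinarith [mul_nonneg hR0 (sub_nonneg.mpr hΔle)]

theorem stmt_16 (n : ℕ) (a d d' : Fin n → ℝ)
    (ha : ∀ k, a k ∈ Set.Icc (0:ℝ) 1) (hd : ∀ k, d k ∈ Set.Icc (0:ℝ) 1)
    (hd' : ∀ k, d' k ∈ Set.Icc (0:ℝ) 1) (hle : ∀ k, d k ≤ d' k)
    (Δ : (Fin n → Bool) → ℝ) (hΔ0 : ∀ s, 0 ≤ Δ s)
    (hanti : ∀ s s' : Fin n → Bool, (∀ k, s k ≤ s' k) → Δ s' ≤ Δ s) :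
    payoff n Δ a d' ≤ payoff n Δ a d := by
  have key : ∀ F : Finset (Fin n),
      payoff n Δ a (fun k => if k ∈ F then d' k else d k) ≤ payoff n Δ a d := by
    intro F
    induction F using Finset.induction with
    | empty => simp
    | @insert j F hj ih =>
      calc payoff n Δ a (fun k => if k ∈ insert j F then d' k else d k)
          ≤ payoff n Δ a (fun k => if k ∈ F then d' k else d k) := by
            have he : (fun k => if k ∈ insert j F then d' k else d k) =
                Function.update (fun k => if k ∈ F then d' k else d k) j (d' j) := by
              funext k
              by_cases hk : k = j
              · subst hk; simp [Function.update_self, hj]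
              · simp [Function.update_of_ne hk, Finset.mem_insert, hk]
            rw [he]
            apply step
            · exact ha
            · intro k
              by_cases hk : k ∈ F <;> simp [hk] <;> [exact hd' k; exact hd k]
            · simp [hj]; exact hle j
            · exact (hd' j).2
            · exact hΔ0
            · exact hanti
        _ ≤ payoff n Δ a d := ih
  have := key Finset.univ
  simpa using this
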